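/- Suppose n jobs are scheduled non-preemptively on k identical machines by FIFO: job j has release time r_j and processing time p_j ≤ P, and whenever a machine is idle and there is a released unprocessed job, it starts the released job with the earliest release time. If for all time points a ≤ b the total processing time of jobs released in [a, b] is at most k(b − a) + D, then every job has flow time at most D/k + 2(k−1)P/k. -/
import Mathlib


open scoped Classical

/-- FIFO on `k` identical machines: job `j` runs on machine `M j`, starting at
time `s j ≥ r j`, with processing time `p j ≤ P`; intervals on a given machine
are disjoint, jobs are started in nondecreasing order of release times, and no
machine idles while a released unstarted job exists.  If the total processing
time of jobs released in any `[a, b]` is at most `k(b − a) + D`, then every job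
has flow time at most `D/k + 2(k−1)P/k`. -/
theorem stmt_9 (n k : ℕ) (hk : 1 ≤ k) (r p s : Fin n → ℝ) (M : Fin n → Fin k)
    (P D : ℝ) (hD : 0 ≤ D) (hP : ∀ j, p j ≤ P) (hp : ∀ j, 0 ≤ p j)
    (hr : ∀ j, 0 ≤ r j)
    (hstart : ∀ j, r j ≤ s j)
    (hdisj : ∀ i j, i ≠ j → M i = M j → s i + p i ≤ s j ∨ s j + p j ≤ s i)
    (hfifo : ∀ i j, s i < s j → r i ≤ r j)
    (hbusy : ∀ j t, r j ≤ t → t < s j →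
      ∀ m : Fin k, ∃ i, M i = m ∧ s i ≤ t ∧ t < s i + p i)
    (hbacklog : ∀ a b : ℝ, a ≤ b →
      ∑ j ∈ Finset.univ.filter (fun j => a ≤ r j ∧ r j ≤ b), p j
        ≤ (k : ℝ) * (b - a) + D) :
    ∀ j, s j + p j - r j ≤ D / (k : ℝ) + 2 * ((k : ℝ) - 1) * P / (k : ℝ) := by
  intro j
  have hk0R : (0:ℝ) < (k:ℝ) := by exact_mod_cast hk
  have hk1R : (1:ℝ) ≤ (k:ℝ) := by exact_mod_cast hk
  have hPnn : (0:ℝ) ≤ P := (hp j).trans (hP j)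
  haveI hNk : Nonempty (Fin k) := ⟨⟨0, hk⟩⟩
  have hkey : (s j + p j - r j) * (k:ℝ) ≤ D + 2*((k:ℝ)-1)*P := by
    by_cases hcase : s j ≤ r j
    · -- degenerate case: s j = r j, flow = p j
      have hsj : s j = r j := le_antisymm hcase (hstart j)
      have hpD : p j ≤ D := by
        have h1 := hbacklog (r j) (r j) le_rfl
        rw [sub_self, mul_zero, zero_add] at h1
        have h2 : p j ≤ ∑ i ∈ Finset.univ.filter (fun i => r j ≤ r i ∧ r i ≤ r j), p i :=
          Finset.single_le_sum (fun i _ => hp i) (by simp)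
        linarith
      have e1 : (s j + p j - r j) * (k:ℝ) = p j + ((k:ℝ)-1)*(p j) := by rw [hsj]; ring
      have e2 : ((k:ℝ)-1)*p j ≤ ((k:ℝ)-1)*P := mul_le_mul_of_nonneg_left (hP j) (by linarith)
      have e3 : 0 ≤ ((k:ℝ)-1)*P := mul_nonneg (by linarith) hPnn
      linarith
    · push_neg at hcase
      -- main case: r j < s j
      set A : Set ℝ := {t | t ≤ s j ∧ ∀ u, t ≤ u → u < s j → ∀ m : Fin k,
        ∃ i, M i = m ∧ s i ≤ u ∧ u < s i + p i} with hA_def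
      have hrjA : r j ∈ A := ⟨hstart j, fun u h1 h2 m => hbusy j u h1 h2 m⟩
      have hAbdd : BddBelow A := by
        refine ⟨0, fun t ht => ?_⟩
        rcases lt_or_ge t (s j) with h | h
        · obtain ⟨i, _, h1, _⟩ := ht.2 t le_rfl h (Classical.arbitrary (Fin k))
          exact le_trans (le_trans (hr i) (hstart i)) h1
        · exact le_trans (le_trans (hr j) (hstart j)) h
      have hAne : A.Nonempty := ⟨r j, hrjA⟩
      set a := sInf A with ha_def
      have ha_rj : a ≤ r j := csInf_le hAbdd hrjA
      have fact1 : ∀ u, a < u → u < s j → ∀ m : Fin k,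
          ∃ i, M i = m ∧ s i ≤ u ∧ u < s i + p i := by
        intro u h1 h2 m
        obtain ⟨t, htA, htu⟩ := exists_lt_of_csInf_lt hAne h1
        exact htA.2 u htu.le h2 m
      have hstartle : ∀ i, r i < a → s i ≤ a := by
        intro i hi
        by_contra hsi
        push_neg at hsi
        have hmid : (r i + a)/2 ∈ A := by
          constructor
          · linarith [hstart j]
          · intro v hv1 hv2 m
            rcases le_or_gt v a with h' | h'
            · exact hbusy i v (by linarith) (by linarith) m
            · exact fact1 v h' hv2 m
        have := csInf_le hAbdd hmid
        linarith
      set C := Finset.univ.filter (fun i => s i < s j ∧ a < s i + p i) with hC_def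
      have permachine : ∀ m : Fin k,
          s j - a ≤ ∑ i ∈ C.filter (fun i => M i = m), p i := by
        intro m
        have hsub : Set.Ioo a (s j) ⊆
            ⋃ i ∈ C.filter (fun i => M i = m), Set.Ico (s i) (s i + p i) := by
          intro u hu
          obtain ⟨i, hiM, h1, h2⟩ := fact1 u hu.1 hu.2 m
          have hiF : i ∈ C.filter (fun i => M i = m) :=
            Finset.mem_filter.2 ⟨Finset.mem_filter.2 ⟨Finset.mem_univ _,
              lt_of_le_of_lt h1 hu.2, hu.1.trans h2⟩, hiM⟩
          exact Set.mem_biUnion hiF ⟨h1, h2⟩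
        have hmeas := (MeasureTheory.measure_mono hsub).trans
          (MeasureTheory.measure_biUnion_finset_le (μ := MeasureTheory.volume) _ _)
        rw [Real.volume_Ioo] at hmeas
        have heq : ∀ i ∈ C.filter (fun i => M i = m),
            MeasureTheory.volume (Set.Ico (s i) (s i + p i)) = ENNReal.ofReal (p i) := by
          intro i _
          rw [Real.volume_Ico, add_sub_cancel_left]
        rw [Finset.sum_congr rfl heq,
          ← ENNReal.ofReal_sum_of_nonneg (fun i _ => hp i)] at hmeas
        exact (ENNReal.ofReal_le_ofReal_iff (Finset.sum_nonneg fun i _ => hp i)).1 hmeas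
      have htotal : (k:ℝ) * (s j - a) ≤ ∑ i ∈ C, p i := by
        have h1 : ∑ _m : Fin k, (s j - a)
            ≤ ∑ m : Fin k, ∑ i ∈ C.filter (fun i => M i = m), p i :=
          Finset.sum_le_sum fun m _ => permachine m
        rw [Finset.sum_const, Finset.card_univ, Fintype.card_fin, nsmul_eq_mul] at h1
        rwa [Finset.sum_fiberwise] at h1
      set G := C.filter (fun i => a ≤ r i) with hG_def
      set B := C.filter (fun i => ¬ a ≤ r i) with hB_def
      have hsplit : ∑ i ∈ C, p i = ∑ i ∈ G, p i + ∑ i ∈ B, p i :=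
        (Finset.sum_filter_add_sum_filter_not C _ p).symm
      have hjG : j ∉ G := fun hmem => by
        have := (Finset.mem_filter.1 (Finset.mem_filter.1 hmem).1).2.1
        exact lt_irrefl _ this
      have hGsub : insert j G ⊆ Finset.univ.filter (fun i => a ≤ r i ∧ r i ≤ r j) := by
        intro i hi
        rcases Finset.mem_insert.1 hi with rfl | hi
        · exact Finset.mem_filter.2 ⟨Finset.mem_univ _, ha_rj, le_rfl⟩
        · have h1 := Finset.mem_filter.1 hi
          have h2 := Finset.mem_filter.1 h1.1
          exact Finset.mem_filter.2 ⟨Finset.mem_univ _, h1.2, hfifo i j h2.2.1⟩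
      have hgood : p j + ∑ i ∈ G, p i ≤ (k:ℝ)*(r j - a) + D := by
        rw [← Finset.sum_insert hjG]
        exact le_trans (Finset.sum_le_sum_of_subset_of_nonneg hGsub (fun i _ _ => hp i))
          (hbacklog a (r j) ha_rj)
      have hBprop : ∀ i ∈ B, s i ≤ a ∧ a < s i + p i ∧ r i < a := by
        intro i hi
        have h1 := Finset.mem_filter.1 hi
        have h2 := Finset.mem_filter.1 h1.1
        have hra : r i < a := not_le.1 h1.2
        exact ⟨hstartle i hra, h2.2.2, hra⟩
      have hm0 : ∃ m0 : Fin k, ∀ i ∈ B, M i ≠ m0 := by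
        by_contra hcon
        push_neg at hcon
        choose f hfB hfM using hcon
        obtain ⟨m1, _, hm1⟩ := Finset.exists_max_image (Finset.univ : Finset (Fin k))
          (fun m => s (f m)) Finset.univ_nonempty
        have hP1 := hBprop (f m1) (hfB m1)
        have hbusy_le_a : ∀ u, s (f m1) ≤ u → u ≤ a → ∀ m : Fin k,
            ∃ i, M i = m ∧ s i ≤ u ∧ u < s i + p i := by
          intro u h1 h2 m
          have h3 := hBprop (f m) (hfB m)
          exact ⟨f m, hfM m, le_trans (hm1 m (Finset.mem_univ m)) h1,
            lt_of_le_of_lt h2 h3.2.1⟩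
        rcases eq_or_lt_of_le hP1.1 with heq | hlt
        · have hrA : r (f m1) ∈ A := by
            constructor
            · linarith [hP1.2.2, hstart j]
            · intro v hv1 hv2 m
              rcases lt_trichotomy v a with h' | h' | h'
              · exact hbusy (f m1) v hv1 (by rw [heq]; exact h') m
              · exact hbusy_le_a v (by rw [heq, h']) (le_of_eq h') m
              · exact fact1 v h' hv2 m
          have := csInf_le hAbdd hrA
          linarith [hP1.2.2]
        · have htA : s (f m1) ∈ A := by
            constructor
            · linarith [hstart j]
            · intro v hv1 hv2 m
              rcases le_or_gt v a with h' | h'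
              · exact hbusy_le_a v hv1 h' m
              · exact fact1 v h' hv2 m
          have := csInf_le hAbdd htA
          linarith
      obtain ⟨m0, hm0⟩ := hm0
      have hinj : Set.InjOn M ↑B := by
        intro i hi i' hi' hMM
        by_contra hne
        have h1 := hBprop i (Finset.mem_coe.1 hi)
        have h2 := hBprop i' (Finset.mem_coe.1 hi')
        rcases hdisj i i' hne hMM with h | h
        · linarith [h1.2.1, h2.1]
        · linarith [h2.2.1, h1.1]
      have hcard : (B.card : ℝ) ≤ (k:ℝ) - 1 := by
        have h1 : B.image M ⊆ Finset.univ.erase m0 := by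
          intro m hm
          obtain ⟨i, hi, rfl⟩ := Finset.mem_image.1 hm
          exact Finset.mem_erase.2 ⟨hm0 i hi, Finset.mem_univ _⟩
        have h2 : B.card ≤ k - 1 := by
          calc B.card = (B.image M).card := (Finset.card_image_of_injOn hinj).symm
            _ ≤ (Finset.univ.erase m0).card := Finset.card_le_card h1
            _ = k - 1 := by
                rw [Finset.card_erase_of_mem (Finset.mem_univ _), Finset.card_univ,
                  Fintype.card_fin]
        calc (B.card:ℝ) ≤ ((k-1 : ℕ) : ℝ) := by exact_mod_cast h2
          _ = (k:ℝ) - 1 := by rw [Nat.cast_sub hk, Nat.cast_one]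
      have hbad : ∑ i ∈ B, p i ≤ ((k:ℝ) - 1) * P := by
        calc ∑ i ∈ B, p i ≤ B.card • P := Finset.sum_le_card_nsmul B p P (fun i _ => hP i)
          _ = (B.card : ℝ) * P := nsmul_eq_mul _ _
          _ ≤ ((k:ℝ)-1) * P := mul_le_mul_of_nonneg_right hcard hPnn
      have hpj : ((k:ℝ)-1) * p j ≤ ((k:ℝ)-1) * P :=
        mul_le_mul_of_nonneg_left (hP j) (by linarith)
      have hring : (s j + p j - r j)*(k:ℝ)
          = (k:ℝ)*(s j - a) - (k:ℝ)*(r j - a) + (k:ℝ)*p j := by ring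
      have hkp : (k:ℝ)*p j = p j + ((k:ℝ)-1)*p j := by ring
      linarith
  have hfin : D / (k:ℝ) + 2*((k:ℝ)-1)*P/(k:ℝ) = (D + 2*((k:ℝ)-1)*P)/(k:ℝ) := by ring
  rw [hfin, le_div_iff₀ hk0R]
  exact hkey
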